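/- Let X be a compact Hausdorff space and B a topological *-algebra that is ν-sequentially complete for an infinite ordinal ν (every Cauchy ν-sequence converges). Then the algebra C(X,B) of continuous maps with the compact-open topology is also ν-sequentially complete. -/

import Mathlib

open scoped Pointwise


/-- A ν-sequence is Cauchy if its differences eventually lie in any neighborhood of 0. -/
def NuCauchy {A : Type*} [AddGroup A] [TopologicalSpace A] (ν : Ordinal)
    (x : Ordinal → A) : Prop :=
  ∀ U ∈ nhds (0 : A), ∃ γ, γ < ν ∧
    ∀ α β : Ordinal, γ ≤ α → α < ν → γ ≤ β → β < ν → x α - x β ∈ U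

/-- Convergence of a ν-sequence to a point. -/
def NuConv {A : Type*} [TopologicalSpace A] (ν : Ordinal) (x : Ordinal → A) (l : A) : Prop :=
  ∀ U ∈ nhds l, ∃ γ, γ < ν ∧ ∀ α : Ordinal, γ ≤ α → α < ν → x α ∈ U

/-- ν-sequential completeness: every Cauchy ν-sequence converges. -/
def NuComplete (ν : Ordinal) (A : Type*) [AddGroup A] [TopologicalSpace A] : Prop :=
  ∀ x : Ordinal → A, NuCauchy ν x → ∃ l : A, NuConv ν x l

/-- If `B` is a ν-sequentially complete topological *-algebra and `X` is compact Hausdorff,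
then `C(X,B)` with the compact-open topology is ν-sequentially complete. -/
theorem mappingSpace_nuComplete {X B : Type*} [TopologicalSpace X] [CompactSpace X]
    [T2Space X] [Ring B] [Algebra ℂ B] [StarRing B] [TopologicalSpace B] [IsTopologicalRing B]
    [ContinuousStar B] [ContinuousConstSMul ℂ B] [T2Space B]
    (ν : Ordinal) (hν : Ordinal.omega0 ≤ ν) (hB : NuComplete ν B) :
    NuComplete ν C(X, B) := by
  intro x hx
  have hν0 : (0 : Ordinal) < ν := lt_of_lt_of_le Ordinal.omega0_pos hν
  -- uniform Cauchy
  have hUC : ∀ U ∈ nhds (0 : B), ∃ γ, γ < ν ∧ ∀ α β, γ ≤ α → α < ν → γ ≤ β → β < ν →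
      ∀ p : X, x α p - x β p ∈ U := by
    intro U hU
    obtain ⟨V, hVU, hVopen, hV0⟩ := mem_nhds_iff.mp hU
    have hset : {f : C(X, B) | Set.MapsTo f Set.univ V} ∈ nhds (0 : C(X, B)) :=
      (ContinuousMap.isOpen_setOf_mapsTo isCompact_univ hVopen).mem_nhds
        (fun q _ => by simpa using hV0)
    obtain ⟨γ, hγ, h⟩ := hx _ hset
    exact ⟨γ, hγ, fun α β hα hαν hβ hβν p =>
      hVU (by simpa using h α β hα hαν hβ hβν (Set.mem_univ p))⟩
  -- pointwise Cauchy, hence pointwise limits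
  have hpt : ∀ p : X, NuCauchy ν fun α => x α p := by
    intro p U hU
    obtain ⟨γ, hγ, h⟩ := hUC U hU
    exact ⟨γ, hγ, fun α β hα hαν hβ hβν => h α β hα hαν hβ hβν p⟩
  choose l₀ hl₀ using fun p => hB _ (hpt p)
  -- uniform convergence to the pointwise limit
  have hUL : ∀ U ∈ nhds (0 : B), ∃ γ, γ < ν ∧ ∀ α, γ ≤ α → α < ν →
      ∀ p : X, x α p - l₀ p ∈ U := by
    intro U hU
    obtain ⟨V, ⟨hVnhds, hVclosed⟩, hVU⟩ := (closed_nhds_basis (0 : B)).mem_iff.mp hU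
    obtain ⟨γ, hγ, h⟩ := hUC V hVnhds
    refine ⟨γ, hγ, fun α hα hαν p => hVU ?_⟩
    by_contra hcon
    have hWmem : (fun b : B => x α p - b) ⁻¹' Vᶜ ∈ nhds (l₀ p) :=
      (hVclosed.isOpen_compl.preimage (continuous_const.sub continuous_id)).mem_nhds hcon
    obtain ⟨γ', hγ', h'⟩ := hl₀ p _ hWmem
    have hβν : max γ γ' < ν := max_lt hγ hγ'
    have h1 : x α p - x (max γ γ') p ∈ V :=
      h α (max γ γ') hα hαν (le_max_left _ _) hβν p
    exact h' (max γ γ') (le_max_right _ _) hβν h1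
  -- continuity of the pointwise limit
  have hcont : Continuous l₀ := by
    rw [continuous_iff_continuousAt]
    intro p₀ U hU
    rw [Filter.mem_map]
    have haddc : Filter.Tendsto (fun b : B => b + l₀ p₀) (nhds 0) (nhds (l₀ p₀)) := by
      have : Filter.Tendsto (fun b : B => b + l₀ p₀) (nhds 0) (nhds (0 + l₀ p₀)) :=
        Filter.Tendsto.add Filter.tendsto_id tendsto_const_nhds
      rwa [zero_add] at this
    have hU₀ : (fun b : B => b + l₀ p₀) ⁻¹' U ∈ nhds (0 : B) := haddc hU
    obtain ⟨V, hV, hVsub⟩ := exists_nhds_half_neg hU₀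
    obtain ⟨W, hW, hWsub⟩ := exists_nhds_zero_half hV
    obtain ⟨γ, hγν, hγ⟩ := hUL (W ∩ V) (Filter.inter_mem hW hV)
    have hc : x γ p₀ - l₀ p₀ ∈ W ∩ V := hγ γ le_rfl hγν p₀
    have hcγ : Filter.Tendsto (fun p : X => x γ p - x γ p₀) (nhds p₀) (nhds 0) := by
      have : Filter.Tendsto (fun p : X => x γ p - x γ p₀) (nhds p₀) (nhds (x γ p₀ - x γ p₀)) :=
        ((x γ).continuous.tendsto p₀).sub tendsto_const_nhds
      rwa [sub_self] at this
    have hN : (fun p : X => x γ p - x γ p₀) ⁻¹' W ∈ nhds p₀ := hcγ hW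
    refine Filter.mem_of_superset hN fun p hp => ?_
    have ha : x γ p - x γ p₀ ∈ W := hp
    have hb : x γ p - l₀ p ∈ W ∩ V := hγ γ le_rfl hγν p
    have key : ((x γ p - x γ p₀) + (x γ p₀ - l₀ p₀)) - (x γ p - l₀ p)
        ∈ (fun b : B => b + l₀ p₀) ⁻¹' U :=
      hVsub _ (hWsub _ ha _ hc.1) _ hb.2
    have heq : ((x γ p - x γ p₀) + (x γ p₀ - l₀ p₀)) - (x γ p - l₀ p) + l₀ p₀ = l₀ p := by
      abel
    simpa [Set.mem_preimage, heq] using key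
  -- the limit in C(X, B)
  set l : C(X, B) := ⟨l₀, hcont⟩ with hl
  refine ⟨l, ?_⟩
  haveI : Nonempty {o : Ordinal // o < ν} := ⟨⟨0, hν0⟩⟩
  have hT : Filter.Tendsto (fun a : {o : Ordinal // o < ν} => x a.1) Filter.atTop (nhds l) := by
    rw [ContinuousMap.tendsto_nhds_compactOpen]
    intro K hK V hV hmap
    obtain ⟨W, hW, hWsub⟩ :=
      compact_open_separated_add_right (hK.image hcont) hV (Set.mapsTo_iff_image_subset.mp hmap)
    obtain ⟨γ, hγν, hγ⟩ := hUL W hW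
    refine Filter.eventually_atTop.mpr ⟨⟨γ, hγν⟩, fun b hb => fun p hp => ?_⟩
    have hmem : l₀ p + (x b.1 p - l₀ p) ∈ (⇑l '' K) + W :=
      Set.add_mem_add (Set.mem_image_of_mem _ hp) (hγ b.1 hb b.2 p)
    have : l₀ p + (x b.1 p - l₀ p) = x b.1 p := by abel
    exact hWsub (this ▸ hmem)
  intro U hU
  have hmem : (fun a : {o : Ordinal // o < ν} => x a.1) ⁻¹' U ∈
      (Filter.atTop : Filter {o : Ordinal // o < ν}) := hT hU
  obtain ⟨a, ha⟩ := Filter.mem_atTop_sets.mp hmem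
  exact ⟨a.1, a.2, fun α hα hαν => ha ⟨α, hαν⟩ (Subtype.mk_le_mk.mpr hα)⟩
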